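/- (Optimal CIA precoder, Lemma 1.) Let N, L ≥ 1, let T ∈ Matrix (Fin N) (Fin (N+L)) ℂ have rank N (the zero-forcing interference constraint matrix), let W ∈ Matrix (Fin N) (Fin (N+L)) ℂ (the noise-whitened secondary channel S_η^{-1/2}·H̃_ss), and let c > 0 be a real number (the total power budget). Then there exist a semi-unitary matrix E ∈ Matrix (Fin (N+L)) (Fin L) ℂ (Eᴴ·E = I_L) with T·E = 0 and a vector p : Fin L → ℝ with p_i ≥ 0 and ∑_{i=1}^{L} p_i ≤ c, such that S★ = E·diag(p)·Eᴴ is positive semidefinite, satisfies T·S★ = 0 and Re(trace S★) ≤ c, and for every positive semidefinite S ∈ Matrix (Fin (N+L)) (Fin (N+L)) ℂ with T·S = 0 and Re(trace S) ≤ c one has Re(det(I_N + W·S·Wᴴ)) ≤ Re(det(I_N + W·S★·Wᴴ)). That is, the constrained log-det spectral-efficiency maximization is solved by a semi-unitary precoder with a diagonal (water-filling) power loading. -/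

import Mathlib

open Matrix
open scoped ComplexOrder

attribute [local instance] Matrix.normedAddCommGroup Matrix.normedSpace


lemma kernel_onb (N L : ℕ) (T : Matrix (Fin N) (Fin (N + L)) ℂ) (hT : T.rank = N) :
    ∃ E₀ : Matrix (Fin (N + L)) (Fin L) ℂ,
      E₀ᴴ * E₀ = 1 ∧ T * E₀ = 0 ∧
      ∀ x : Fin (N + L) → ℂ, T *ᵥ x = 0 → (E₀ * E₀ᴴ) *ᵥ x = x := by
  classical
  set f := Matrix.toEuclideanLin T with hf
  set K := LinearMap.ker f with hK
  have hrange : Module.finrank ℂ (LinearMap.range f) = N := by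
    rw [hf, Matrix.toEuclideanLin_eq_toLin]
    rw [← Matrix.rank_eq_finrank_range_toLin T (PiLp.basisFun 2 ℂ (Fin N))
      (PiLp.basisFun 2 ℂ (Fin (N+L)))]
    exact hT
  have hdim : Module.finrank ℂ K = L := by
    have h1 := LinearMap.finrank_range_add_finrank_ker f
    rw [finrank_euclideanSpace_fin, hrange, ← hK] at h1
    omega
  set B : OrthonormalBasis (Fin L) ℂ K :=
    (stdOrthonormalBasis ℂ K).reindex (finCongr hdim) with hB
  set E₀ : Matrix (Fin (N + L)) (Fin L) ℂ :=
    Matrix.of (fun i j => ((B j : EuclideanSpace ℂ (Fin (N + L))) i)) with hE₀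
  have hmem : ∀ j, T *ᵥ ((B j : EuclideanSpace ℂ (Fin (N + L))) : Fin (N+L) → ℂ) = 0 := by
    intro j
    exact congrArg WithLp.ofLp (LinearMap.mem_ker.mp (B j).2)
  clear_value f K
  refine ⟨E₀, ?_, ?_, ?_⟩
  · ext j k
    have horth := orthonormal_iff_ite.mp B.orthonormal j k
    rw [Submodule.coe_inner, PiLp.inner_apply] at horth
    simp only [RCLike.inner_apply] at horth
    simpa [Matrix.mul_apply, hE₀, Matrix.one_apply, mul_comm] using horth
  · ext i j
    have := congrFun (hmem j) i
    simpa [Matrix.mul_apply, Matrix.mulVec, dotProduct, hE₀] using this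
  · intro x hx
    have hxK : (WithLp.equiv 2 (Fin (N+L) → ℂ)).symm x ∈ K := by
      rw [hK, LinearMap.mem_ker, hf, WithLp.equiv_symm_apply, Matrix.toEuclideanLin_apply_piLp_toLp, hx]
      rfl
    set xK : K := ⟨(WithLp.equiv 2 (Fin (N+L) → ℂ)).symm x, hxK⟩ with hxKdef
    have hrep := B.sum_repr' xK
    have hrep2 := congrArg K.subtype hrep
    rw [map_sum] at hrep2
    simp only [_root_.map_smul, Submodule.coe_subtype] at hrep2
    have hrep3 := congrArg (WithLp.linearEquiv 2 ℂ (Fin (N+L) → ℂ)) hrep2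
    rw [map_sum] at hrep3
    simp only [_root_.map_smul] at hrep3
    funext i
    have h5 := congrFun hrep3 i
    simp only [Finset.sum_apply, Pi.smul_apply, smul_eq_mul, Submodule.coe_inner,
      PiLp.inner_apply, RCLike.inner_apply, WithLp.linearEquiv_apply,
      hxKdef, WithLp.ofLp_toLp, WithLp.equiv_symm_apply] at h5
    calc ((E₀ * E₀ᴴ) *ᵥ x) i
        = ∑ k, ∑ j, (B j : EuclideanSpace ℂ (Fin (N+L))) i *
            (starRingEnd ℂ) ((B j : EuclideanSpace ℂ (Fin (N+L))) k) * x k := by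
          simp [Matrix.mulVec, Matrix.mul_apply, dotProduct, hE₀,
            Matrix.conjTranspose_apply, Finset.sum_mul]
      _ = ∑ j, (∑ k, (starRingEnd ℂ) ((B j : EuclideanSpace ℂ (Fin (N+L))) k) * x k) *
            (B j : EuclideanSpace ℂ (Fin (N+L))) i := by
          rw [Finset.sum_comm]
          refine Finset.sum_congr rfl fun j _ => ?_
          rw [Finset.sum_mul]
          refine Finset.sum_congr rfl fun k _ => ?_
          ring
      _ = x i := by simpa [mul_comm] using h5

/-- Optimal CIA precoder, Lemma 1: the constrained log-det
spectral-efficiency maximization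
`max det(I_N + W·S·Wᴴ)` s.t. `S ⪰ 0`, `T·S = 0`, `Re(tr S) ≤ c`
is solved by `S★ = E·diag(p)·Eᴴ` for some semi-unitary `E` with `T·E = 0` and
some nonnegative (water-filling) power loading `p` with `∑ pᵢ ≤ c`. -/
theorem optimal_cia_precoder (N L : ℕ) (hN : 1 ≤ N) (hL : 1 ≤ L)
    (T : Matrix (Fin N) (Fin (N + L)) ℂ) (hT : T.rank = N)
    (W : Matrix (Fin N) (Fin (N + L)) ℂ) (c : ℝ) (hc : 0 < c) :
    ∃ (E : Matrix (Fin (N + L)) (Fin L) ℂ) (p : Fin L → ℝ),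
      Eᴴ * E = 1 ∧
      T * E = 0 ∧
      (∀ i, 0 ≤ p i) ∧
      (∑ i : Fin L, p i) ≤ c ∧
      (E * Matrix.diagonal (fun i => (p i : ℂ)) * Eᴴ).PosSemidef ∧
      T * (E * Matrix.diagonal (fun i => (p i : ℂ)) * Eᴴ) = 0 ∧
      ((E * Matrix.diagonal (fun i => (p i : ℂ)) * Eᴴ).trace).re ≤ c ∧
      ∀ S : Matrix (Fin (N + L)) (Fin (N + L)) ℂ,
        S.PosSemidef → T * S = 0 → (S.trace).re ≤ c →
          ((1 + W * S * Wᴴ).det).re ≤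
            ((1 + W * (E * Matrix.diagonal (fun i => (p i : ℂ)) * Eᴴ) * Wᴴ).det).re := by
  obtain ⟨E₀, hE1, hE2, hproj⟩ := kernel_onb N L T hT
  classical
  -- P * S = S for feasible S
  have hPS : ∀ S : Matrix (Fin (N+L)) (Fin (N+L)) ℂ, T * S = 0 → (E₀ * E₀ᴴ) * S = S := by
    intro S hTS
    ext i j
    have hcol : T *ᵥ (fun k => S k j) = 0 := by
      funext a
      have := congrFun (congrFun hTS a) j
      simpa [Matrix.mul_apply, Matrix.mulVec, dotProduct] using this
    have := congrFun (hproj _ hcol) i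
    simpa [Matrix.mulVec, Matrix.mul_apply, dotProduct] using this
  have hdecomp : ∀ S : Matrix (Fin (N+L)) (Fin (N+L)) ℂ, S.IsHermitian → T * S = 0 →
      E₀ * (E₀ᴴ * S * E₀) * E₀ᴴ = S := by
    intro S hS hTS
    have h1 := hPS S hTS
    have h2 : S * (E₀ * E₀ᴴ) = S := by
      have := congrArg Matrix.conjTranspose h1
      rwa [Matrix.conjTranspose_mul, Matrix.conjTranspose_mul,
        Matrix.conjTranspose_conjTranspose, hS.eq] at this
    calc E₀ * (E₀ᴴ * S * E₀) * E₀ᴴ = ((E₀ * E₀ᴴ) * S) * (E₀ * E₀ᴴ) := by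
          simp only [Matrix.mul_assoc]
      _ = S := by rw [h1, h2]
  -- trace formula
  have htr : ∀ R : Matrix (Fin L) (Fin L) ℂ, ((Rᴴ * R).trace).re = ∑ j, ∑ i, ‖R i j‖^2 := by
    intro R
    rw [Matrix.trace, Complex.re_sum]
    refine Finset.sum_congr rfl fun j _ => ?_
    rw [Matrix.diag, Matrix.mul_apply, Complex.re_sum]
    refine Finset.sum_congr rfl fun i _ => ?_
    rw [Matrix.conjTranspose_apply]
    have : (star (R i j)) * R i j = ((Complex.normSq (R i j) : ℝ) : ℂ) := by
      rw [Complex.star_def, mul_comm, Complex.mul_conj]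
    rw [this, Complex.ofReal_re, Complex.normSq_eq_norm_sq]
  -- the compact set
  set Bset : Set (Matrix (Fin L) (Fin L) ℂ) := {R | ((Rᴴ * R).trace).re ≤ c} with hBset
  have hclosed : IsClosed Bset := by
    apply isClosed_le _ continuous_const
    exact Complex.continuous_re.comp
      ((Continuous.matrix_conjTranspose continuous_id).matrix_mul continuous_id).matrix_trace
  have hbounded : Bornology.IsBounded Bset := by
    rw [isBounded_iff_forall_norm_le]
    refine ⟨Real.sqrt c, fun R hR => ?_⟩
    rw [Matrix.norm_le_iff (Real.sqrt_nonneg c)]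
    intro i j
    rw [Real.le_sqrt (norm_nonneg _) hc.le]
    calc ‖R i j‖ ^ 2 ≤ ∑ i', ‖R i' j‖^2 :=
          Finset.single_le_sum (f := fun i' => ‖R i' j‖^2) (fun _ _ => sq_nonneg _) (Finset.mem_univ i)
      _ ≤ ∑ j', ∑ i', ‖R i' j'‖^2 :=
          Finset.single_le_sum (f := fun j' => ∑ i', ‖R i' j'‖^2)
            (fun _ _ => Finset.sum_nonneg fun _ _ => sq_nonneg _) (Finset.mem_univ j)
      _ ≤ c := by rw [← htr R]; exact hR

  haveI : ProperSpace (Matrix (Fin L) (Fin L) ℂ) := FiniteDimensional.proper ℂ _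
  have hcompact : IsCompact Bset := Metric.isCompact_iff_isClosed_bounded.mpr ⟨hclosed, hbounded⟩
  have hne : Bset.Nonempty := ⟨0, by simp [hBset]; positivity⟩
  set A : Matrix (Fin N) (Fin L) ℂ := W * E₀ with hA
  set φ : Matrix (Fin L) (Fin L) ℂ → ℝ :=
    fun R => ((1 + (A * Rᴴ) * (A * Rᴴ)ᴴ).det).re with hφ
  have hφc : Continuous φ := by
    apply Complex.continuous_re.comp
    apply Continuous.matrix_det
    apply Continuous.add continuous_const
    have hm : Continuous fun R : Matrix (Fin L) (Fin L) ℂ => A * Rᴴ :=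
      continuous_const.matrix_mul (Continuous.matrix_conjTranspose continuous_id)
    exact hm.matrix_mul hm.matrix_conjTranspose
  obtain ⟨R₀, hR₀B, hmax⟩ := hcompact.exists_isMaxOn hne hφc.continuousOn
  set Q₀ : Matrix (Fin L) (Fin L) ℂ := R₀ᴴ * R₀ with hQ₀def
  have hQ₀ : Q₀.PosSemidef := Matrix.posSemidef_conjTranspose_mul_self R₀
  have hq : Q₀.IsHermitian := hQ₀.isHermitian
  set U : Matrix (Fin L) (Fin L) ℂ := (hq.eigenvectorUnitary : Matrix (Fin L) (Fin L) ℂ) with hU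
  set p : Fin L → ℝ := hq.eigenvalues with hp
  have hspec : Q₀ = U * Matrix.diagonal (fun i => (p i : ℂ)) * Uᴴ := by
    have := hq.spectral_theorem
    rwa [Unitary.conjStarAlgAut_apply, Matrix.star_eq_conjTranspose] at this
  have hUU : Uᴴ * U = 1 := by
    rw [← Matrix.star_eq_conjTranspose]
    exact Matrix.mem_unitaryGroup_iff'.mp hq.eigenvectorUnitary.2
  set E : Matrix (Fin (N+L)) (Fin L) ℂ := E₀ * U with hE
  have hSstar : E * Matrix.diagonal (fun i => (p i : ℂ)) * Eᴴ = E₀ * Q₀ * E₀ᴴ := by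
    rw [hspec, hE, Matrix.conjTranspose_mul]
    simp only [Matrix.mul_assoc]
  have htrQ₀ : Q₀.trace.re = ∑ i, p i := by
    rw [hspec, Matrix.trace_mul_cycle, hUU, Matrix.one_mul, Matrix.trace_diagonal,
      Complex.re_sum]
    simp
  have hsum : ∑ i, p i ≤ c := by
    rw [← htrQ₀, hQ₀def]
    exact hR₀B
  have hiden : ∀ R : Matrix (Fin L) (Fin L) ℂ,
      W * (E₀ * (Rᴴ * R) * E₀ᴴ) * Wᴴ = (A * Rᴴ) * (A * Rᴴ)ᴴ := by
    intro R
    simp only [Matrix.conjTranspose_mul, Matrix.conjTranspose_conjTranspose, hA,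
      Matrix.mul_assoc]
  refine ⟨E, p, ?_, ?_, ?_, hsum, ?_, ?_, ?_, ?_⟩
  · rw [hE, Matrix.conjTranspose_mul, Matrix.mul_assoc, ← Matrix.mul_assoc E₀ᴴ E₀ U,
      hE1, Matrix.one_mul, hUU]
  · rw [hE, ← Matrix.mul_assoc, hE2, Matrix.zero_mul]
  · exact hQ₀.eigenvalues_nonneg
  · rw [hSstar]
    exact hQ₀.mul_mul_conjTranspose_same E₀
  · rw [hSstar]
    simp only [← Matrix.mul_assoc]
    rw [hE2, Matrix.zero_mul, Matrix.zero_mul]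
  · rw [hSstar, Matrix.trace_mul_cycle, ← Matrix.mul_assoc, hE1, Matrix.one_mul, htrQ₀]
    exact hsum
  · intro S hSpsd hTS hTrS
    set Q : Matrix (Fin L) (Fin L) ℂ := E₀ᴴ * S * E₀ with hQdef
    have hQpsd : Q.PosSemidef := hSpsd.conjTranspose_mul_mul_same E₀
    have hSd : E₀ * Q * E₀ᴴ = S := hdecomp S hSpsd.isHermitian hTS
    have htrQS : Q.trace = S.trace := by
      rw [hQdef, Matrix.trace_mul_cycle, hPS S hTS]
    open scoped MatrixOrder in
    obtain ⟨R₁, hR₁⟩ := CStarAlgebra.nonneg_iff_eq_star_mul_self.mp hQpsd.nonneg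
    rw [Matrix.star_eq_conjTranspose] at hR₁
    have hR₁B : R₁ ∈ Bset := by
      show ((R₁ᴴ * R₁).trace).re ≤ c
      rw [← hR₁, htrQS]
      exact hTrS
    have hle := hmax hR₁B
    calc ((1 + W * S * Wᴴ).det).re
        = φ R₁ := by rw [hφ]; rw [← hSd, hR₁, hiden R₁]
      _ ≤ φ R₀ := hle
      _ = ((1 + W * (E * Matrix.diagonal (fun i => (p i : ℂ)) * Eᴴ) * Wᴴ).det).re := by
          rw [hφ, hSstar, hQ₀def, hiden R₀]
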